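/- Let n = 1, so the EACP C(a,b) is the 2-dimensional algebra on K² with basis {h,r} and multiplication h·r = r·h = (1/2)(a•h + b•r), h·h = 0, r·r = 0, for scalars a,b ∈ K. If (a,b) ≠ (0,0), then C(a,b) is isomorphic as a K-algebra (via a linear bijection φ with φ(x·y) = φ(x)·φ(y)) to exactly one of: C₁, the algebra with h·r = h (i.e. a = 2, b = 0), or C₂, the algebra with h·r = (1/2)(h + r) (i.e. a = 1, b = 1); namely to C₁ when a*b = 0 and to C₂ when a*b ≠ 0. -/

import Mathlib

/-- Multiplication of the 2-dimensional EACP `C(a,b)` on `K × K` with natural basis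
`h = (1,0)`, `r = (0,1)`: `h·r = r·h = (1/2)(a•h + b•r)`, `h·h = r·r = 0`. -/
def eacpMul2 {K : Type*} [Field K] (a b : K) (p q : K × K) : K × K :=
  ((1 / 2 : K) * (q.2 * p.1 + p.2 * q.1) * a, (1 / 2 : K) * (q.2 * p.1 + p.2 * q.1) * b)

/-- Two bilinear multiplications on `K × K` give isomorphic algebras if some linear
bijection intertwines them. -/
def IsAlgIso2 {K : Type*} [Field K] (m₁ m₂ : K × K → K × K → K × K) : Prop :=
  ∃ φ : (K × K) ≃ₗ[K] (K × K), ∀ x y, φ (m₁ x y) = m₂ (φ x) (φ y)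

/-- Diagonal linear equivalence `(x₁,x₂) ↦ (α x₁, β x₂)`. -/
def diagLE {K : Type*} [Field K] (α β : K) (hα : α ≠ 0) (hβ : β ≠ 0) :
    (K × K) ≃ₗ[K] (K × K) where
  toFun x := (α * x.1, β * x.2)
  invFun x := (α⁻¹ * x.1, β⁻¹ * x.2)
  map_add' x y := by simp [Prod.ext_iff]; constructor <;> ring
  map_smul' c x := by simp [Prod.ext_iff, smul_eq_mul]; constructor <;> ring
  left_inv x := by simp [Prod.ext_iff]; constructor <;> field_simp
  right_inv x := by simp [Prod.ext_iff]; constructor <;> field_simp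

/-- Anti-diagonal linear equivalence `(x₁,x₂) ↦ (α x₂, β x₁)`. -/
def adiagLE {K : Type*} [Field K] (α β : K) (hα : α ≠ 0) (hβ : β ≠ 0) :
    (K × K) ≃ₗ[K] (K × K) where
  toFun x := (α * x.2, β * x.1)
  invFun x := (β⁻¹ * x.2, α⁻¹ * x.1)
  map_add' x y := by simp [Prod.ext_iff]; constructor <;> ring
  map_smul' c x := by simp [Prod.ext_iff, smul_eq_mul]; constructor <;> ring
  left_inv x := by simp [Prod.ext_iff]; constructor <;> field_simp
  right_inv x := by simp [Prod.ext_iff]; constructor <;> field_simp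

theorem eacp2_classification {K : Type*} [Field K] (h2 : (2 : K) ≠ 0)
    (a b : K) (hab : (a, b) ≠ ((0 : K), (0 : K))) :
    (a * b = 0 → IsAlgIso2 (eacpMul2 a b) (eacpMul2 (2 : K) (0 : K))) ∧
      (a * b ≠ 0 → IsAlgIso2 (eacpMul2 a b) (eacpMul2 (1 : K) (1 : K))) ∧
      ¬ IsAlgIso2 (eacpMul2 (2 : K) (0 : K)) (eacpMul2 (1 : K) (1 : K)) := by
  refine ⟨?_, ?_, ?_⟩
  · intro hab0
    rcases mul_eq_zero.mp hab0 with ha | hb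
    · -- a = 0, b ≠ 0
      have hb : b ≠ 0 := by
        intro hb; exact hab (by simp [ha, hb])
      refine ⟨adiagLE 1 (b / 2) one_ne_zero (div_ne_zero hb h2), ?_⟩
      intro x y
      simp only [adiagLE, LinearEquiv.coe_mk, Equiv.coe_fn_mk, LinearMap.coe_mk, AddHom.coe_mk, eacpMul2, ha, Prod.mk.injEq]
      constructor <;> (field_simp; try ring)
    · -- b = 0, a ≠ 0
      have ha : a ≠ 0 := by
        intro ha; exact hab (by simp [ha, hb])
      refine ⟨diagLE 1 (a / 2) one_ne_zero (div_ne_zero ha h2), ?_⟩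
      intro x y
      simp only [diagLE, LinearEquiv.coe_mk, Equiv.coe_fn_mk, LinearMap.coe_mk, AddHom.coe_mk, eacpMul2, hb, Prod.mk.injEq]
      constructor <;> (field_simp; try ring)
  · intro hab0
    have ha : a ≠ 0 := left_ne_zero_of_mul hab0
    have hb : b ≠ 0 := right_ne_zero_of_mul hab0
    refine ⟨diagLE b a hb ha, ?_⟩
    intro x y
    simp only [diagLE, LinearEquiv.coe_mk, Equiv.coe_fn_mk, LinearMap.coe_mk, AddHom.coe_mk, eacpMul2, Prod.mk.injEq]
    constructor <;> ring
  · rintro ⟨φ, hφ⟩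
    set x := φ.symm ((1 : K), (0 : K)) with hx
    set y := φ.symm ((0 : K), (1 : K)) with hy
    set P := eacpMul2 (2 : K) (0 : K) x y with hP
    have h1 : φ P = ((1 / 2 : K), (1 / 2 : K)) := by
      have := hφ x y
      rw [← hP] at this
      rw [this, hx, hy]
      simp [eacpMul2]
    have hPP : eacpMul2 (2 : K) (0 : K) P P = 0 := by
      have hP2 : P.2 = 0 := by simp [hP, eacpMul2]
      simp [eacpMul2, hP2, Prod.ext_iff]
    have h3 := hφ P P
    rw [hPP, h1] at h3
    have h4 := congrArg Prod.fst h3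
    simp only [eacpMul2, map_zero, Prod.fst_zero] at h4
    field_simp at h4
    exact h2 (by linear_combination -h4)
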